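/- Under the hypotheses of the directed-information data processing inequality, the gap satisfies I(X^T → A^T ‖ D^T, U₊^{T−1}) − I(X^T → U^T) = I(X^T ; (A^T, D^T) | U^T), which is nonnegative. -/

import Mathlib

open scoped Classical
open Finset

noncomputable def prob {Ω : Type} [Fintype Ω] (p : Ω → ℝ) (E : Ω → Prop) : ℝ :=
  ∑ ω, if E ω then p ω else 0

noncomputable def plog (q : ℝ) : ℝ := if q = 0 then 0 else -q * Real.logb 2 q

/-- Shannon entropy (in bits) of a random variable `X` on a finite space with pmf `p`. -/
noncomputable def entropy {Ω α : Type} [Fintype Ω] (p : Ω → ℝ) (X : Ω → α) : ℝ :=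
  ∑ x ∈ Finset.univ.image X, plog (prob p (fun ω => X ω = x))

/-- Conditional entropy `H(A|Z) = H(A,Z) - H(Z)` (in bits). -/
noncomputable def condEntropy {Ω α β : Type} [Fintype Ω] (p : Ω → ℝ) (A : Ω → α) (Z : Ω → β) : ℝ :=
  entropy p (fun ω => (A ω, Z ω)) - entropy p Z

/-- Mutual information `I(X;Y)` (in bits). -/
noncomputable def mutualInfo {Ω α β : Type} [Fintype Ω] (p : Ω → ℝ) (X : Ω → α) (Y : Ω → β) : ℝ :=
  entropy p X + entropy p Y - entropy p (fun ω => (X ω, Y ω))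

/-- Conditional mutual information `I(X;Y|Z) = H(X|Z) - H(X|Y,Z)` (in bits). -/
noncomputable def condMutualInfo {Ω α β γ : Type} [Fintype Ω] (p : Ω → ℝ)
    (X : Ω → α) (Y : Ω → β) (Z : Ω → γ) : ℝ :=
  condEntropy p X Z - condEntropy p X (fun ω => (Y ω, Z ω))

/-- Expected codeword length `E[ℓ(A)]`. -/
noncomputable def expLen {Ω : Type} [Fintype Ω] (p : Ω → ℝ) (A : Ω → List Bool) : ℝ :=
  ∑ ω, p ω * (A ω).length

/-- θ(x) = x + (1+x)·log₂(1+x) − x·log₂(x); note `Real.logb 2 0 = 0`, so θ(0) = 0. -/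
noncomputable def theta (x : ℝ) : ℝ :=
  x + (1 + x) * Real.logb 2 (1 + x) - x * Real.logb 2 x

/-- The inverse of θ on `[0,∞)`. -/
noncomputable def thetaInv : ℝ → ℝ := Function.invFunOn theta (Set.Ici 0)

/-- History `(X_0, …, X_{t-1})` of a discrete-time process. -/
def hist {Ω α : Type} (X : ℕ → Ω → α) (t : ℕ) (ω : Ω) : Fin t → α := fun i => X i ω

section Base
variable {Ω : Type} [Fintype Ω] (p : Ω → ℝ)

lemma plog_eq (q : ℝ) : plog q = -q * Real.logb 2 q := by
  unfold plog; split <;> simp_all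

lemma prob_congr {E F : Ω → Prop} (h : ∀ ω, E ω ↔ F ω) : prob p E = prob p F :=
  Finset.sum_congr rfl fun ω _ => by simp [h ω]

lemma prob_nonneg (hp : ∀ ω, 0 ≤ p ω) (E : Ω → Prop) : 0 ≤ prob p E :=
  Finset.sum_nonneg fun ω _ => by split <;> [exact hp ω; exact le_refl 0]

lemma single_le_prob (hp : ∀ ω, 0 ≤ p ω) (E : Ω → Prop) (ω : Ω) (hE : E ω) :
    p ω ≤ prob p E := by
  have := Finset.single_le_sum (f := fun ω' => if E ω' then p ω' else 0)
    (fun ω' _ => by show 0 ≤ ite (E ω') (p ω') 0; split <;> [exact hp ω'; exact le_refl 0]) (Finset.mem_univ ω)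
  simpa [hE, prob] using this

lemma prob_true (hsum : ∑ ω, p ω = 1) : prob p (fun _ => True) = 1 := by
  simpa [prob] using hsum

lemma prob_fiber {α : Type} (E : Ω → Prop) (Y : Ω → α) :
    prob p E = ∑ y ∈ Finset.univ.image Y, prob p (fun ω => E ω ∧ Y ω = y) := by
  unfold prob
  rw [Finset.sum_comm]
  refine Finset.sum_congr rfl fun ω _ => ?_
  by_cases hE : E ω
  · simp only [hE, true_and]
    rw [Finset.sum_ite_eq (Finset.univ.image Y) (Y ω) (fun _ => p ω)]
    simp [Finset.mem_image_of_mem]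
  · simp [hE]

lemma entropy_eq {α : Type} (W : Ω → α) :
    entropy p W = ∑ ω, p ω * (-Real.logb 2 (prob p (fun ω' => W ω' = W ω))) := by
  unfold entropy
  rw [← Finset.sum_fiberwise_of_maps_to (g := W) (t := Finset.univ.image W)
    (fun ω _ => Finset.mem_image_of_mem W (Finset.mem_univ ω))]
  refine Finset.sum_congr rfl fun w hw => ?_
  rw [plog_eq]
  have : ∀ ω ∈ Finset.univ.filter (fun ω => W ω = w),
      p ω * (-Real.logb 2 (prob p (fun ω' => W ω' = W ω))) =
      p ω * (-Real.logb 2 (prob p (fun ω' => W ω' = w))) := by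
    intro ω hω
    rw [(Finset.mem_filter.1 hω).2]
  rw [Finset.sum_congr rfl this, ← Finset.sum_mul]
  have hq : ∑ ω ∈ Finset.univ.filter (fun ω => W ω = w), p ω = prob p (fun ω => W ω = w) := by
    rw [prob, Finset.sum_filter]
  rw [hq]; ring

lemma entropy_congr {α β : Type} (Y : Ω → α) (Z : Ω → β)
    (h : ∀ ω ω', Y ω = Y ω' ↔ Z ω = Z ω') : entropy p Y = entropy p Z := by
  rw [entropy_eq, entropy_eq]
  refine Finset.sum_congr rfl fun ω _ => ?_
  rw [prob_congr p (fun ω' => h ω' ω)]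
end Base

section CMI
variable {Ω α β γ : Type} [Fintype Ω] (p : Ω → ℝ) (X : Ω → α) (Y : Ω → β) (Z : Ω → γ)

lemma prob_mono' (hp : ∀ ω, 0 ≤ p ω) {E F : Ω → Prop} (h : ∀ ω, E ω → F ω) :
    prob p E ≤ prob p F := by
  refine Finset.sum_le_sum fun ω _ => ?_
  by_cases hE : E ω
  · simp [hE, h ω hE]
  · simp only [hE, if_false]
    split <;> [exact hp ω; exact le_refl 0]

lemma condMutualInfo_eq_sum :
    condMutualInfo p X Y Z = ∑ ω, p ω *
      (Real.logb 2 (prob p (fun ω' => X ω' = X ω ∧ Y ω' = Y ω ∧ Z ω' = Z ω))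
        + Real.logb 2 (prob p (fun ω' => Z ω' = Z ω))
        - Real.logb 2 (prob p (fun ω' => X ω' = X ω ∧ Z ω' = Z ω))
        - Real.logb 2 (prob p (fun ω' => Y ω' = Y ω ∧ Z ω' = Z ω))) := by
  unfold condMutualInfo condEntropy
  rw [entropy_eq, entropy_eq, entropy_eq, entropy_eq]
  rw [← Finset.sum_sub_distrib, ← Finset.sum_sub_distrib, ← Finset.sum_sub_distrib]
  refine Finset.sum_congr rfl fun ω _ => ?_
  simp only [Prod.mk.injEq]
  ring

lemma condMutualInfo_eq_zero (hp : ∀ ω, 0 ≤ p ω)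
    (h : ∀ (x : α) (y : β) (z : γ),
      prob p (fun ω => X ω = x ∧ Y ω = y ∧ Z ω = z) * prob p (fun ω => Z ω = z) =
      prob p (fun ω => X ω = x ∧ Z ω = z) * prob p (fun ω => Y ω = y ∧ Z ω = z)) :
    condMutualInfo p X Y Z = 0 := by
  rw [condMutualInfo_eq_sum]
  refine Finset.sum_eq_zero fun ω _ => ?_
  rcases eq_or_lt_of_le (hp ω) with h0 | h0
  · rw [← h0]; ring
  · set qXYZ := prob p (fun ω' => X ω' = X ω ∧ Y ω' = Y ω ∧ Z ω' = Z ω) with hq1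
    set qZ := prob p (fun ω' => Z ω' = Z ω) with hq2
    set qXZ := prob p (fun ω' => X ω' = X ω ∧ Z ω' = Z ω) with hq3
    set qYZ := prob p (fun ω' => Y ω' = Y ω ∧ Z ω' = Z ω) with hq4
    have h1 : 0 < qXYZ := lt_of_lt_of_le h0 (single_le_prob p hp _ ω ⟨rfl, rfl, rfl⟩)
    have h2 : 0 < qZ := lt_of_lt_of_le h0 (single_le_prob p hp _ ω rfl)
    have h3 : 0 < qXZ := lt_of_lt_of_le h0 (single_le_prob p hp _ ω ⟨rfl, rfl⟩)
    have h4 : 0 < qYZ := lt_of_lt_of_le h0 (single_le_prob p hp _ ω ⟨rfl, rfl⟩)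
    have key : qXYZ * qZ = qXZ * qYZ := h (X ω) (Y ω) (Z ω)
    have hlog : Real.logb 2 qXYZ + Real.logb 2 qZ = Real.logb 2 qXZ + Real.logb 2 qYZ := by
      rw [← Real.logb_mul (ne_of_gt h1) (ne_of_gt h2),
        ← Real.logb_mul (ne_of_gt h3) (ne_of_gt h4), key]
    have : Real.logb 2 qXYZ + Real.logb 2 qZ - Real.logb 2 qXZ - Real.logb 2 qYZ = 0 := by
      rw [sub_sub, hlog, sub_self]
    rw [this, mul_zero]

lemma cmi_pointwise_bound (hp : ∀ ω, 0 ≤ p ω) (ω : Ω) :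
    (p ω - p ω * (prob p (fun ω' => X ω' = X ω ∧ Z ω' = Z ω) *
        prob p (fun ω' => Y ω' = Y ω ∧ Z ω' = Z ω) /
        (prob p (fun ω' => X ω' = X ω ∧ Y ω' = Y ω ∧ Z ω' = Z ω) *
          prob p (fun ω' => Z ω' = Z ω)))) / Real.log 2 ≤
    p ω * (Real.logb 2 (prob p (fun ω' => X ω' = X ω ∧ Y ω' = Y ω ∧ Z ω' = Z ω))
        + Real.logb 2 (prob p (fun ω' => Z ω' = Z ω))
        - Real.logb 2 (prob p (fun ω' => X ω' = X ω ∧ Z ω' = Z ω))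
        - Real.logb 2 (prob p (fun ω' => Y ω' = Y ω ∧ Z ω' = Z ω))) := by
  have hlog2 : (0:ℝ) < Real.log 2 := Real.log_pos (by norm_num)
  rcases eq_or_lt_of_le (hp ω) with h0 | h0
  · rw [← h0]; simp
  · set qXYZ := prob p (fun ω' => X ω' = X ω ∧ Y ω' = Y ω ∧ Z ω' = Z ω) with hq1
    set qZ := prob p (fun ω' => Z ω' = Z ω) with hq2
    set qXZ := prob p (fun ω' => X ω' = X ω ∧ Z ω' = Z ω) with hq3
    set qYZ := prob p (fun ω' => Y ω' = Y ω ∧ Z ω' = Z ω) with hq4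
    have h1 : 0 < qXYZ := lt_of_lt_of_le h0 (single_le_prob p hp _ ω ⟨rfl, rfl, rfl⟩)
    have h2 : 0 < qZ := lt_of_lt_of_le h0 (single_le_prob p hp _ ω rfl)
    have h3 : 0 < qXZ := lt_of_lt_of_le h0 (single_le_prob p hp _ ω ⟨rfl, rfl⟩)
    have h4 : 0 < qYZ := lt_of_lt_of_le h0 (single_le_prob p hp _ ω ⟨rfl, rfl⟩)
    have hr : 0 < qXYZ * qZ / (qXZ * qYZ) := by positivity
    have hlb : 1 - (qXYZ * qZ / (qXZ * qYZ))⁻¹ ≤ Real.log (qXYZ * qZ / (qXZ * qYZ)) :=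
      Real.one_sub_inv_le_log_of_pos hr
    have hinv : (qXYZ * qZ / (qXZ * qYZ))⁻¹ = qXZ * qYZ / (qXYZ * qZ) := by
      rw [inv_div]
    rw [hinv] at hlb
    have hlogeq : Real.logb 2 qXYZ + Real.logb 2 qZ - Real.logb 2 qXZ - Real.logb 2 qYZ =
        Real.log (qXYZ * qZ / (qXZ * qYZ)) / Real.log 2 := by
      rw [Real.log_div (by positivity) (by positivity),
        Real.log_mul (ne_of_gt h1) (ne_of_gt h2), Real.log_mul (ne_of_gt h3) (ne_of_gt h4)]
      simp only [Real.logb]; ring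
    rw [hlogeq, div_le_iff₀ hlog2]
    calc p ω - p ω * (qXZ * qYZ / (qXYZ * qZ)) = p ω * (1 - qXZ * qYZ / (qXYZ * qZ)) := by ring
      _ ≤ p ω * Real.log (qXYZ * qZ / (qXZ * qYZ)) :=
          mul_le_mul_of_nonneg_left hlb (le_of_lt h0)
      _ = p ω * (Real.log (qXYZ * qZ / (qXZ * qYZ)) / Real.log 2) * Real.log 2 := by
          field_simp

lemma cmi_sum_g_le (hp : ∀ ω, 0 ≤ p ω) :
    ∑ ω, p ω * (prob p (fun ω' => X ω' = X ω ∧ Z ω' = Z ω) *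
        prob p (fun ω' => Y ω' = Y ω ∧ Z ω' = Z ω) /
        (prob p (fun ω' => X ω' = X ω ∧ Y ω' = Y ω ∧ Z ω' = Z ω) *
          prob p (fun ω' => Z ω' = Z ω))) ≤ ∑ ω, p ω := by
  set V : Ω → α × β × γ := fun ω => (X ω, Y ω, Z ω) with hV
  calc ∑ ω, p ω * (prob p (fun ω' => X ω' = X ω ∧ Z ω' = Z ω) *
        prob p (fun ω' => Y ω' = Y ω ∧ Z ω' = Z ω) /
        (prob p (fun ω' => X ω' = X ω ∧ Y ω' = Y ω ∧ Z ω' = Z ω) *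
          prob p (fun ω' => Z ω' = Z ω)))
      = ∑ v ∈ Finset.univ.image V, ∑ ω ∈ Finset.univ.filter (fun ω => V ω = v),
          p ω * (prob p (fun ω' => X ω' = X ω ∧ Z ω' = Z ω) *
            prob p (fun ω' => Y ω' = Y ω ∧ Z ω' = Z ω) /
            (prob p (fun ω' => X ω' = X ω ∧ Y ω' = Y ω ∧ Z ω' = Z ω) *
              prob p (fun ω' => Z ω' = Z ω))) :=
        (Finset.sum_fiberwise_of_maps_to
          (fun ω _ => Finset.mem_image_of_mem V (Finset.mem_univ ω)) _).symm
    _ ≤ ∑ v ∈ Finset.univ.image V,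
          prob p (fun ω' => X ω' = v.1 ∧ Z ω' = v.2.2) *
            prob p (fun ω' => Y ω' = v.2.1 ∧ Z ω' = v.2.2) /
            prob p (fun ω' => Z ω' = v.2.2) := by
        refine Finset.sum_le_sum fun v hv => ?_
        set qXYZ := prob p (fun ω' => X ω' = v.1 ∧ Y ω' = v.2.1 ∧ Z ω' = v.2.2) with hqXYZ
        set qZ := prob p (fun ω' => Z ω' = v.2.2) with hqZ
        set qXZ := prob p (fun ω' => X ω' = v.1 ∧ Z ω' = v.2.2) with hqXZ
        set qYZ := prob p (fun ω' => Y ω' = v.2.1 ∧ Z ω' = v.2.2) with hqYZ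
        have hgval : ∀ ω ∈ Finset.univ.filter (fun ω => V ω = v),
            p ω * (prob p (fun ω' => X ω' = X ω ∧ Z ω' = Z ω) *
              prob p (fun ω' => Y ω' = Y ω ∧ Z ω' = Z ω) /
              (prob p (fun ω' => X ω' = X ω ∧ Y ω' = Y ω ∧ Z ω' = Z ω) *
                prob p (fun ω' => Z ω' = Z ω))) = p ω * (qXZ * qYZ / (qXYZ * qZ)) := by
          intro ω hω
          have hVω : V ω = v := (Finset.mem_filter.1 hω).2
          have hVω' : (X ω, Y ω, Z ω) = v := hVω
          obtain ⟨e1, e2, e3⟩ : X ω = v.1 ∧ Y ω = v.2.1 ∧ Z ω = v.2.2 := by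
            rw [← hVω']; exact ⟨rfl, rfl, rfl⟩
          rw [e1, e2, e3, ← hqXYZ, ← hqZ, ← hqXZ, ← hqYZ]
        have hsumfib : ∑ ω ∈ Finset.univ.filter (fun ω => V ω = v), p ω = qXYZ := by
          rw [hqXYZ, prob, Finset.sum_filter]
          refine Finset.sum_congr rfl fun ω _ => ?_
          congr 1
          rw [eq_iff_iff]
          constructor
          · rintro h
            have h' : (X ω, Y ω, Z ω) = v := h
            rw [← h']; exact ⟨rfl, rfl, rfl⟩
          · rintro ⟨e1, e2, e3⟩
            show (X ω, Y ω, Z ω) = v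
            rw [e1, e2, e3]
        rw [Finset.sum_congr rfl hgval, ← Finset.sum_mul, hsumfib]
        rcases eq_or_lt_of_le (prob_nonneg p hp
            (fun ω' => X ω' = v.1 ∧ Y ω' = v.2.1 ∧ Z ω' = v.2.2)) with h1 | h1
        · rw [← hqXYZ] at h1
          rw [← h1, zero_mul]
          exact div_nonneg (mul_nonneg (prob_nonneg p hp _) (prob_nonneg p hp _))
            (prob_nonneg p hp _)
        · rw [← hqXYZ] at h1
          have h2 : 0 < qZ := lt_of_lt_of_le h1 (prob_mono' p hp fun ω h => h.2.2)
          have hle : qXYZ * (qXZ * qYZ / (qXYZ * qZ)) = qXZ * qYZ / qZ := by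
            field_simp
          rw [hle]
    _ ≤ ∑ v ∈ (Finset.univ.image X) ×ˢ (Finset.univ.image Y) ×ˢ (Finset.univ.image Z),
          prob p (fun ω' => X ω' = v.1 ∧ Z ω' = v.2.2) *
            prob p (fun ω' => Y ω' = v.2.1 ∧ Z ω' = v.2.2) /
            prob p (fun ω' => Z ω' = v.2.2) := by
        refine Finset.sum_le_sum_of_subset_of_nonneg ?_ ?_
        · intro v hv
          obtain ⟨ω₀, _, hω₀⟩ := Finset.mem_image.1 hv
          rw [← hω₀]
          exact Finset.mk_mem_product (Finset.mem_image_of_mem X (Finset.mem_univ ω₀))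
            (Finset.mk_mem_product (Finset.mem_image_of_mem Y (Finset.mem_univ ω₀))
              (Finset.mem_image_of_mem Z (Finset.mem_univ ω₀)))
        · intro v _ _
          exact div_nonneg (mul_nonneg (prob_nonneg p hp _) (prob_nonneg p hp _))
            (prob_nonneg p hp _)
    _ ≤ ∑ ω, p ω := by
        rw [Finset.sum_product]
        simp only [Finset.sum_product]
        rw [Finset.sum_congr rfl (fun x _ => Finset.sum_comm), Finset.sum_comm]
        have hz : ∀ z ∈ Finset.univ.image Z,
            (∑ x ∈ Finset.univ.image X, ∑ y ∈ Finset.univ.image Y,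
              prob p (fun ω' => X ω' = x ∧ Z ω' = z) *
                prob p (fun ω' => Y ω' = y ∧ Z ω' = z) / prob p (fun ω' => Z ω' = z)) ≤
            prob p (fun ω' => Z ω' = z) := by
          intro z _
          have hfibY : ∑ y ∈ Finset.univ.image Y, prob p (fun ω' => Y ω' = y ∧ Z ω' = z) =
              prob p (fun ω' => Z ω' = z) := by
            rw [prob_fiber p (fun ω' => Z ω' = z) Y]
            exact Finset.sum_congr rfl fun y _ => prob_congr p fun ω => and_comm
          have hfibX : ∑ x ∈ Finset.univ.image X, prob p (fun ω' => X ω' = x ∧ Z ω' = z) =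
              prob p (fun ω' => Z ω' = z) := by
            rw [prob_fiber p (fun ω' => Z ω' = z) X]
            exact Finset.sum_congr rfl fun x _ => prob_congr p fun ω => and_comm
          rcases eq_or_lt_of_le (prob_nonneg p hp (fun ω' => Z ω' = z)) with h2 | h2
          · rw [← h2]
            simp
          · refine le_of_eq ?_
            have hxeq : ∀ x ∈ Finset.univ.image X,
                (∑ y ∈ Finset.univ.image Y,
                  prob p (fun ω' => X ω' = x ∧ Z ω' = z) *
                    prob p (fun ω' => Y ω' = y ∧ Z ω' = z) / prob p (fun ω' => Z ω' = z)) =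
                prob p (fun ω' => X ω' = x ∧ Z ω' = z) := by
              intro x _
              have hcomm : ∀ y ∈ Finset.univ.image Y,
                  prob p (fun ω' => X ω' = x ∧ Z ω' = z) *
                    prob p (fun ω' => Y ω' = y ∧ Z ω' = z) / prob p (fun ω' => Z ω' = z) =
                  prob p (fun ω' => X ω' = x ∧ Z ω' = z) / prob p (fun ω' => Z ω' = z) *
                    prob p (fun ω' => Y ω' = y ∧ Z ω' = z) :=
                fun y _ => mul_div_right_comm _ _ _
              rw [Finset.sum_congr rfl hcomm, ← Finset.mul_sum, hfibY,
                div_mul_cancel₀ _ (ne_of_gt h2)]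
            rw [Finset.sum_congr rfl hxeq, hfibX]
        calc _ ≤ ∑ z ∈ Finset.univ.image Z, prob p (fun ω' => Z ω' = z) :=
              Finset.sum_le_sum hz
          _ = ∑ ω, p ω := by
              have h1 := prob_fiber p (fun _ => True) Z
              have h2 : prob p (fun _ => True) = ∑ ω, p ω := by simp [prob]
              rw [← h2, h1]
              exact Finset.sum_congr rfl fun z _ => prob_congr p fun ω => by simp
  
end CMI

lemma condMutualInfo_nonneg {Ω α β γ : Type} [Fintype Ω] (p : Ω → ℝ)
    (hp : ∀ ω, 0 ≤ p ω) (X : Ω → α) (Y : Ω → β) (Z : Ω → γ) :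
    0 ≤ condMutualInfo p X Y Z := by
  rw [condMutualInfo_eq_sum]
  refine le_trans ?_ (Finset.sum_le_sum fun ω _ => cmi_pointwise_bound p X Y Z hp ω)
  rw [← Finset.sum_div]
  apply div_nonneg _ (le_of_lt (Real.log_pos (by norm_num)))
  rw [Finset.sum_sub_distrib, sub_nonneg]
  exact cmi_sum_g_le p X Y Z hp

lemma hist_succ_iff {Ω α : Type} (W : ℕ → Ω → α) (t : ℕ) (ω ω' : Ω) :
    hist W (t+1) ω = hist W (t+1) ω' ↔ hist W t ω = hist W t ω' ∧ W t ω = W t ω' := by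
  constructor
  · intro h
    exact ⟨funext fun i => congrFun h ⟨i.val, Nat.lt_succ_of_lt i.isLt⟩,
      congrFun h ⟨t, Nat.lt_succ_self t⟩⟩
  · rintro ⟨h1, h2⟩
    funext i
    rcases Nat.lt_or_ge i.val t with hlt | hge
    · exact congrFun h1 ⟨i.val, hlt⟩
    · have hi : i.val = t := Nat.le_antisymm (Nat.lt_succ_iff.1 i.isLt) hge
      show W i.val ω = W i.val ω'
      rw [hi]; exact h2

lemma hist_zero {Ω α : Type} (W : ℕ → Ω → α) (ω ω' : Ω) : hist W 0 ω = hist W 0 ω' :=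
  funext fun i => i.elim0

section Main
variable {Ω α β γ δ : Type} [Fintype Ω] (p : Ω → ℝ)

lemma entropy_const (hsum : ∑ ω, p ω = 1) {α' : Type} (W : Ω → α')
    (hW : ∀ ω ω', W ω = W ω') : entropy p W = 0 := by
  rw [entropy_eq]
  refine Finset.sum_eq_zero fun ω _ => ?_
  rw [prob_congr p (F := fun _ => True) (fun ω' => iff_of_true (hW ω' ω) trivial),
    prob_true p hsum, Real.logb_one]
  simp

lemma step_lemma (hp : ∀ ω, 0 ≤ p ω) (t : ℕ)
    (X : ℕ → Ω → α) (A : ℕ → Ω → β) (D : ℕ → Ω → γ) (U : ℕ → Ω → δ)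
    (hD : ∀ (d : γ) (v : (Fin t → β) × (Fin t → γ) × (Fin t → δ) × (Fin (t + 1) → α)),
      prob p (fun ω => D t ω = d ∧ (hist A t ω, hist D t ω, hist U t ω, hist X (t + 1) ω) = v) =
        prob p (fun ω => D t ω = d) *
          prob p (fun ω => (hist A t ω, hist D t ω, hist U t ω, hist X (t + 1) ω) = v))
    (hU : ∀ (x : Fin (t + 1) → α) (v : δ)
        (z : (Fin (t + 1) → β) × (Fin (t + 1) → γ) × (Fin t → δ)),
      prob p (fun ω => hist X (t + 1) ω = x ∧ U t ω = v ∧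
            (hist A (t + 1) ω, hist D (t + 1) ω, hist U t ω) = z) *
          prob p (fun ω => (hist A (t + 1) ω, hist D (t + 1) ω, hist U t ω) = z) =
        prob p (fun ω => hist X (t + 1) ω = x ∧
            (hist A (t + 1) ω, hist D (t + 1) ω, hist U t ω) = z) *
          prob p (fun ω => U t ω = v ∧ (hist A (t + 1) ω, hist D (t + 1) ω, hist U t ω) = z))
    (hX : ∀ (v : (Fin t → β) × (Fin t → γ)) (x : α) (z : (Fin t → α) × (Fin t → δ)),
      prob p (fun ω => (hist A t ω, hist D t ω) = v ∧ X t ω = x ∧ (hist X t ω, hist U t ω) = z) *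
          prob p (fun ω => (hist X t ω, hist U t ω) = z) =
        prob p (fun ω => (hist A t ω, hist D t ω) = v ∧ (hist X t ω, hist U t ω) = z) *
          prob p (fun ω => X t ω = x ∧ (hist X t ω, hist U t ω) = z)) :
    condMutualInfo p (hist X (t + 1)) (A t)
        (fun ω => (hist A t ω, hist D (t + 1) ω, hist U t ω)) -
      condMutualInfo p (hist X (t + 1)) (U t) (hist U t) =
    condMutualInfo p (hist X (t + 1))
        (fun ω => (hist A (t + 1) ω, hist D (t + 1) ω)) (hist U (t + 1)) -
      condMutualInfo p (hist X t) (fun ω => (hist A t ω, hist D t ω)) (hist U t) := by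
  have Z2 : condMutualInfo p (hist X (t + 1)) (U t)
      (fun ω => (hist A (t + 1) ω, hist D (t + 1) ω, hist U t ω)) = 0 :=
    condMutualInfo_eq_zero p _ _ _ hp (fun x y z => hU x y z)
  have Z3 : condMutualInfo p (fun ω => (hist A t ω, hist D t ω)) (X t)
      (fun ω => (hist X t ω, hist U t ω)) = 0 :=
    condMutualInfo_eq_zero p _ _ _ hp (fun x y z => hX x y z)
  have hiff : ∀ (x : Fin (t + 1) → α) (z : (Fin t → β) × (Fin t → γ) × (Fin t → δ)) (ω : Ω),
      (hist A t ω, hist D t ω, hist U t ω, hist X (t + 1) ω) = (z.1, z.2.1, z.2.2, x) ↔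
      (hist X (t + 1) ω = x ∧ (hist A t ω, hist D t ω, hist U t ω) = z) := by
    intro x z ω
    simp only [Prod.ext_iff]
    tauto
  have Z1 : condMutualInfo p (hist X (t + 1)) (D t)
      (fun ω => (hist A t ω, hist D t ω, hist U t ω)) = 0 := by
    refine condMutualInfo_eq_zero p _ _ _ hp (fun x y z => ?_)
    have P1 : prob p (fun ω => hist X (t + 1) ω = x ∧ D t ω = y ∧
          (hist A t ω, hist D t ω, hist U t ω) = z) =
        prob p (fun ω => D t ω = y) *
          prob p (fun ω => hist X (t + 1) ω = x ∧ (hist A t ω, hist D t ω, hist U t ω) = z) := by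
      rw [prob_congr p (F := fun ω => D t ω = y ∧
            (hist A t ω, hist D t ω, hist U t ω, hist X (t + 1) ω) = (z.1, z.2.1, z.2.2, x))
          (fun ω => by simp only [hiff x z ω]; tauto),
        hD y (z.1, z.2.1, z.2.2, x),
        prob_congr p (E := fun ω =>
            (hist A t ω, hist D t ω, hist U t ω, hist X (t + 1) ω) = (z.1, z.2.1, z.2.2, x))
          (fun ω => hiff x z ω)]
    have P2 : prob p (fun ω => D t ω = y ∧ (hist A t ω, hist D t ω, hist U t ω) = z) =
        prob p (fun ω => D t ω = y) *
          prob p (fun ω => (hist A t ω, hist D t ω, hist U t ω) = z) := by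
      rw [prob_fiber p (fun ω => D t ω = y ∧ (hist A t ω, hist D t ω, hist U t ω) = z)
        (hist X (t + 1))]
      have hterm : ∀ (x' : Fin (t + 1) → α),
          prob p (fun ω => (D t ω = y ∧ (hist A t ω, hist D t ω, hist U t ω) = z) ∧
            hist X (t + 1) ω = x') =
          prob p (fun ω => D t ω = y) *
            prob p (fun ω => hist X (t + 1) ω = x' ∧
              (hist A t ω, hist D t ω, hist U t ω) = z) := by
        intro x'
        rw [prob_congr p (F := fun ω => D t ω = y ∧
              (hist A t ω, hist D t ω, hist U t ω, hist X (t + 1) ω) = (z.1, z.2.1, z.2.2, x'))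
            (fun ω => by simp only [hiff x' z ω]; tauto),
          hD y (z.1, z.2.1, z.2.2, x'),
          prob_congr p (E := fun ω =>
              (hist A t ω, hist D t ω, hist U t ω, hist X (t + 1) ω) = (z.1, z.2.1, z.2.2, x'))
            (fun ω => hiff x' z ω)]
      refine (Finset.sum_congr rfl fun x' _ => hterm x').trans ?_
      rw [← Finset.mul_sum]
      congr 1
      rw [prob_fiber p (fun ω => (hist A t ω, hist D t ω, hist U t ω) = z) (hist X (t + 1))]
      exact Finset.sum_congr rfl fun x' _ => prob_congr p fun ω => and_comm
    rw [P1, P2]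
    ring
  simp only [condMutualInfo, condEntropy] at Z1 Z2 Z3 ⊢
  have g1 : (entropy p fun ω => (hist X (t + 1) ω, A t ω, hist A t ω, hist D (t + 1) ω, hist U t ω)) =
      entropy p fun ω => (hist X (t + 1) ω, hist A (t + 1) ω, hist D (t + 1) ω, hist U t ω) :=
    entropy_congr p _ _ fun ω ω' => by simp only [Prod.mk.injEq, hist_succ_iff]; tauto
  have g2 : (entropy p fun ω => (A t ω, hist A t ω, hist D (t + 1) ω, hist U t ω)) =
      entropy p fun ω => (hist A (t + 1) ω, hist D (t + 1) ω, hist U t ω) :=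
    entropy_congr p _ _ fun ω ω' => by simp only [Prod.mk.injEq, hist_succ_iff]; tauto
  have g3 : (entropy p fun ω => (hist X (t + 1) ω, U t ω, hist U t ω)) =
      entropy p fun ω => (hist X (t + 1) ω, hist U (t + 1) ω) :=
    entropy_congr p _ _ fun ω ω' => by simp only [Prod.mk.injEq, hist_succ_iff]; tauto
  have g4 : (entropy p fun ω => (U t ω, hist U t ω)) = entropy p (hist U (t + 1)) :=
    entropy_congr p _ _ fun ω ω' => by simp only [Prod.mk.injEq, hist_succ_iff]; tauto
  have g5 : (entropy p fun ω => (hist X (t + 1) ω, (hist A (t + 1) ω, hist D (t + 1) ω), hist U (t + 1) ω)) =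
      entropy p fun ω => (hist X (t + 1) ω, hist A (t + 1) ω, hist D (t + 1) ω, hist U (t + 1) ω) :=
    entropy_congr p _ _ fun ω ω' => by simp only [Prod.mk.injEq, hist_succ_iff]; tauto
  have g6 : (entropy p fun ω => ((hist A (t + 1) ω, hist D (t + 1) ω), hist U (t + 1) ω)) =
      entropy p fun ω => (hist A (t + 1) ω, hist D (t + 1) ω, hist U (t + 1) ω) :=
    entropy_congr p _ _ fun ω ω' => by simp only [Prod.mk.injEq, hist_succ_iff]; tauto
  have g7 : (entropy p fun ω => (hist X t ω, (hist A t ω, hist D t ω), hist U t ω)) =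
      entropy p fun ω => (hist X t ω, hist A t ω, hist D t ω, hist U t ω) :=
    entropy_congr p _ _ fun ω ω' => by simp only [Prod.mk.injEq, hist_succ_iff]; tauto
  have g8 : (entropy p fun ω => ((hist A t ω, hist D t ω), hist U t ω)) =
      entropy p fun ω => (hist A t ω, hist D t ω, hist U t ω) :=
    entropy_congr p _ _ fun ω ω' => by simp only [Prod.mk.injEq, hist_succ_iff]; tauto
  have z2a : (entropy p fun ω => (hist X (t + 1) ω, U t ω, hist A (t + 1) ω, hist D (t + 1) ω, hist U t ω)) =
      entropy p fun ω => (hist X (t + 1) ω, hist A (t + 1) ω, hist D (t + 1) ω, hist U (t + 1) ω) :=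
    entropy_congr p _ _ fun ω ω' => by simp only [Prod.mk.injEq, hist_succ_iff]; tauto
  have z2b : (entropy p fun ω => (U t ω, hist A (t + 1) ω, hist D (t + 1) ω, hist U t ω)) =
      entropy p fun ω => (hist A (t + 1) ω, hist D (t + 1) ω, hist U (t + 1) ω) :=
    entropy_congr p _ _ fun ω ω' => by simp only [Prod.mk.injEq, hist_succ_iff]; tauto
  have z3a : (entropy p fun ω => ((hist A t ω, hist D t ω), hist X t ω, hist U t ω)) =
      entropy p fun ω => (hist X t ω, hist A t ω, hist D t ω, hist U t ω) :=
    entropy_congr p _ _ fun ω ω' => by simp only [Prod.mk.injEq, hist_succ_iff]; tauto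
  have z3b : (entropy p fun ω => ((hist A t ω, hist D t ω), X t ω, hist X t ω, hist U t ω)) =
      entropy p fun ω => (hist X (t + 1) ω, hist A t ω, hist D t ω, hist U t ω) :=
    entropy_congr p _ _ fun ω ω' => by simp only [Prod.mk.injEq, hist_succ_iff]; tauto
  have z3c : (entropy p fun ω => (X t ω, hist X t ω, hist U t ω)) =
      entropy p fun ω => (hist X (t + 1) ω, hist U t ω) :=
    entropy_congr p _ _ fun ω ω' => by simp only [Prod.mk.injEq, hist_succ_iff]; tauto
  have z1a : (entropy p fun ω => (hist X (t + 1) ω, D t ω, hist A t ω, hist D t ω, hist U t ω)) =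
      entropy p fun ω => (hist X (t + 1) ω, hist A t ω, hist D (t + 1) ω, hist U t ω) :=
    entropy_congr p _ _ fun ω ω' => by simp only [Prod.mk.injEq, hist_succ_iff]; tauto
  have z1b : (entropy p fun ω => (D t ω, hist A t ω, hist D t ω, hist U t ω)) =
      entropy p fun ω => (hist A t ω, hist D (t + 1) ω, hist U t ω) :=
    entropy_congr p _ _ fun ω ω' => by simp only [Prod.mk.injEq, hist_succ_iff]; tauto
  rw [g1, g2, g5, g6, g7, g8, g3, g4]
  rw [z2a, z2b] at Z2
  rw [z3a, z3b, z3c] at Z3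
  rw [z1a, z1b] at Z1
  linear_combination -Z1 - Z2 - Z3

end Main

/-- The gap in the directed-information DPI equals `I(X^T ; (A^T, D^T) | U^T) ≥ 0`. -/
theorem directed_info_gap {Ω α β γ δ : Type} [Fintype Ω]
    (p : Ω → ℝ) (hp : ∀ ω, 0 ≤ p ω) (hsum : ∑ ω, p ω = 1) (T : ℕ)
    (X : ℕ → Ω → α) (A : ℕ → Ω → β) (D : ℕ → Ω → γ) (U : ℕ → Ω → δ)
(hD : ∀ t : ℕ, ∀ (d : γ) (v : (Fin t → β) × (Fin t → γ) × (Fin t → δ) × (Fin (t + 1) → α)),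
      prob p (fun ω => D t ω = d ∧ (hist A t ω, hist D t ω, hist U t ω, hist X (t + 1) ω) = v) =
        prob p (fun ω => D t ω = d) *
          prob p (fun ω => (hist A t ω, hist D t ω, hist U t ω, hist X (t + 1) ω) = v))
    (hU : ∀ t : ℕ, ∀ (x : Fin (t + 1) → α) (v : δ)
        (z : (Fin (t + 1) → β) × (Fin (t + 1) → γ) × (Fin t → δ)),
      prob p (fun ω => hist X (t + 1) ω = x ∧ U t ω = v ∧
            (hist A (t + 1) ω, hist D (t + 1) ω, hist U t ω) = z) *
          prob p (fun ω => (hist A (t + 1) ω, hist D (t + 1) ω, hist U t ω) = z) =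
        prob p (fun ω => hist X (t + 1) ω = x ∧
            (hist A (t + 1) ω, hist D (t + 1) ω, hist U t ω) = z) *
          prob p (fun ω => U t ω = v ∧ (hist A (t + 1) ω, hist D (t + 1) ω, hist U t ω) = z))
    (hX : ∀ t : ℕ, ∀ (v : (Fin t → β) × (Fin t → γ)) (x : α) (z : (Fin t → α) × (Fin t → δ)),
      prob p (fun ω => (hist A t ω, hist D t ω) = v ∧ X t ω = x ∧ (hist X t ω, hist U t ω) = z) *
          prob p (fun ω => (hist X t ω, hist U t ω) = z) =
        prob p (fun ω => (hist A t ω, hist D t ω) = v ∧ (hist X t ω, hist U t ω) = z) *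
          prob p (fun ω => X t ω = x ∧ (hist X t ω, hist U t ω) = z)) :
    (∑ t ∈ Finset.range (T + 1),
        condMutualInfo p (hist X (t + 1)) (A t)
          (fun ω => (hist A t ω, hist D (t + 1) ω, hist U t ω))) -
      (∑ t ∈ Finset.range (T + 1),
        condMutualInfo p (hist X (t + 1)) (U t) (hist U t)) =
      condMutualInfo p (hist X (T + 1))
        (fun ω => (hist A (T + 1) ω, hist D (T + 1) ω)) (hist U (T + 1)) ∧
    0 ≤ condMutualInfo p (hist X (T + 1))
        (fun ω => (hist A (T + 1) ω, hist D (T + 1) ω)) (hist U (T + 1)) := by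
  have hstep : ∀ t ∈ Finset.range (T + 1),
      condMutualInfo p (hist X (t + 1)) (A t)
          (fun ω => (hist A t ω, hist D (t + 1) ω, hist U t ω)) -
        condMutualInfo p (hist X (t + 1)) (U t) (hist U t) =
      condMutualInfo p (hist X (t + 1))
          (fun ω => (hist A (t + 1) ω, hist D (t + 1) ω)) (hist U (t + 1)) -
        condMutualInfo p (hist X t) (fun ω => (hist A t ω, hist D t ω)) (hist U t) :=
    fun t _ => step_lemma p hp t X A D U (hD t) (hU t) (hX t)
  constructor
  · rw [← Finset.sum_sub_distrib]
    have key := Finset.sum_range_sub (f := fun n => condMutualInfo p (hist X n)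
      (fun ω => (hist A n ω, hist D n ω)) (hist U n)) (T + 1)
    refine ((Finset.sum_congr rfl hstep).trans key).trans ?_
    have hE0 : condMutualInfo p (hist X 0) (fun ω => (hist A 0 ω, hist D 0 ω)) (hist U 0) = 0 := by
      simp only [condMutualInfo, condEntropy]
      rw [entropy_const p hsum (fun ω => (hist X 0 ω, hist U 0 ω))
          (fun ω ω' => by simp only [hist_zero X ω ω', hist_zero U ω ω']),
        entropy_const p hsum (hist U 0) (hist_zero U),
        entropy_const p hsum (fun ω => (hist X 0 ω, (hist A 0 ω, hist D 0 ω), hist U 0 ω))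
          (fun ω ω' => by
            simp only [hist_zero X ω ω', hist_zero A ω ω', hist_zero D ω ω',
              hist_zero U ω ω']),
        entropy_const p hsum (fun ω => ((hist A 0 ω, hist D 0 ω), hist U 0 ω))
          (fun ω ω' => by simp only [hist_zero A ω ω', hist_zero D ω ω', hist_zero U ω ω'])]
      ring
    simp only [hE0, sub_zero]
  · exact condMutualInfo_nonneg p hp _ _ _
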